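/- For natural numbers n ≥ k, L ≥ 0, and ε ∈ [0,1], the first-block success probability Pr_suc of the (n,k,L) MDP sliding code (Eq. (4)) satisfies Pr_suc ≥ F((L+1)(n-k); (L+1)n, ε), where F(t;m,ε) = ∑_{r=0}^{t} C(m,r)(1-ε)^{m-r}ε^r. -/

import Mathlib

/-- Binomial pmf `f(r;m,ε) = C(m,r)(1-ε)^{m-r}ε^r`. -/
noncomputable def binPMF (m r : ℕ) (ε : ℝ) : ℝ :=
  (m.choose r : ℝ) * (1 - ε) ^ (m - r) * ε ^ r

/-- Binomial cdf `F(t;m,ε) = ∑_{r=0}^{t} f(r;m,ε)`. -/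
noncomputable def binCDF (m t : ℕ) (ε : ℝ) : ℝ :=
  ∑ r ∈ Finset.range (t + 1), binPMF m r ε

open Classical in
/-- First-block success probability of the `(n,k,L)` MDP sliding code (Eq. (4)). -/
noncomputable def prSuc (n k L : ℕ) (ε : ℝ) : ℝ :=
  ∑ l ∈ Finset.range (L + 1),
    ∑ δ ∈ Fintype.piFinset (fun _ : Fin (l + 1) => Finset.range (n + 1)),
      if (∀ j : Fin (l + 1), (j : ℕ) < l →
            ((j : ℕ) + 1) * (n - k) <
              ∑ i ∈ Finset.univ.filter (fun i : Fin (l + 1) => (i : ℕ) ≤ (j : ℕ)), δ i)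
          ∧ (∑ i, δ i) ≤ (l + 1) * (n - k)
      then ∏ i, binPMF n (δ i) ε
      else 0

lemma binPMF_nonneg {m r : ℕ} {ε : ℝ} (hε0 : 0 ≤ ε) (hε1 : ε ≤ 1) :
    0 ≤ binPMF m r ε := by
  have h : (0:ℝ) ≤ 1 - ε := by linarith
  unfold binPMF
  have := (m.choose r).cast_nonneg (α := ℝ)
  positivity

lemma binPMF_eq_zero {m r : ℕ} {ε : ℝ} (h : m < r) : binPMF m r ε = 0 := by
  simp [binPMF, Nat.choose_eq_zero_of_lt h]

lemma sum_binPMF (n : ℕ) (ε : ℝ) : ∑ x ∈ Finset.range (n + 1), binPMF n x ε = 1 := by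
  rw [show (1:ℝ) = (ε + (1 - ε)) ^ n by rw [add_sub_cancel, one_pow]]
  rw [add_pow]
  refine Finset.sum_congr rfl fun x _ => ?_
  simp [binPMF]; ring

lemma binPMF_add (a b r : ℕ) (ε : ℝ) :
    binPMF (a + b) r ε = ∑ ij ∈ Finset.HasAntidiagonal.antidiagonal r, binPMF a ij.1 ε * binPMF b ij.2 ε := by
  unfold binPMF
  rw [Nat.add_choose_eq, Nat.cast_sum, Finset.sum_mul, Finset.sum_mul]
  refine Finset.sum_congr rfl fun ij hij => ?_
  obtain ⟨i, j⟩ := ij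
  simp only [Finset.HasAntidiagonal.mem_antidiagonal] at hij
  by_cases hia : i ≤ a
  · by_cases hjb : j ≤ b
    · have h1 : a + b - r = (a - i) + (b - j) := by omega
      have h2 : r = i + j := hij.symm
      rw [h1, h2, pow_add, pow_add]
      push_cast; ring
    · simp [Nat.choose_eq_zero_of_lt (by omega : b < j)]
  · simp [Nat.choose_eq_zero_of_lt (by omega : a < i)]

lemma sum_piFinset_snoc {M : Type*} [AddCommMonoid M] (m : ℕ) (s : Finset ℕ)
    (F : (Fin (m + 1) → ℕ) → M) :
    ∑ δ ∈ Fintype.piFinset (fun _ : Fin (m + 1) => s), F δ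
      = ∑ δ ∈ Fintype.piFinset (fun _ : Fin m => s), ∑ x ∈ s, F (Fin.snoc δ x) := by
  rw [← Finset.sum_product']
  refine Finset.sum_bij' (i := fun δ _ => (Fin.init δ, δ (Fin.last m)))
    (j := fun p _ => Fin.snoc p.1 p.2) ?_ ?_ ?_ ?_ ?_
  · intro δ hδ
    simp only [Fintype.mem_piFinset] at hδ
    simp only [Finset.mem_product, Fintype.mem_piFinset]
    exact ⟨fun i => hδ _, hδ _⟩
  · intro p hp
    simp only [Finset.mem_product, Fintype.mem_piFinset] at hp
    simp only [Fintype.mem_piFinset]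
    intro i
    refine Fin.lastCases ?_ ?_ i
    · simpa using hp.2
    · intro j; simpa using hp.1 j
  · intro δ _; exact Fin.snoc_init_self δ
  · intro p hp
    simp only [Fin.init_snoc, Fin.snoc_last]
  · intro δ _; rw [Fin.snoc_init_self]

lemma sum_delta (n : ℕ) (ε : ℝ) (m r : ℕ) :
    ∑ δ ∈ Fintype.piFinset (fun _ : Fin m => Finset.range (n + 1)),
      (if ∑ i, δ i = r then ∏ i, binPMF n (δ i) ε else 0) = binPMF (m * n) r ε := by
  induction m generalizing r with
  | zero =>
    rw [show Fintype.piFinset (fun _ : Fin 0 => Finset.range (n+1)) = {fun i => 0} from by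
      apply Finset.eq_singleton_iff_unique_mem.2
      constructor
      · simp only [Fintype.mem_piFinset]; intro i; exact i.elim0
      · intro δ _; funext i; exact i.elim0]
    rcases Nat.eq_zero_or_pos r with rfl | hr
    · simp [binPMF]
    · simp [binPMF, Nat.choose_eq_zero_of_lt hr, Finset.sum_eq_zero_iff]
      omega
  | succ m ih =>
    rw [sum_piFinset_snoc]
    have hR : binPMF ((m + 1) * n) r ε
        = ∑ δ ∈ Fintype.piFinset (fun _ : Fin m => Finset.range (n + 1)),
            (if ∑ i, δ i ∈ Finset.range (r + 1)
             then (∏ i, binPMF n (δ i) ε) * binPMF n (r - ∑ i, δ i) ε else 0) := by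
      have : (m + 1) * n = m * n + n := by ring
      rw [this, binPMF_add, Finset.Nat.sum_antidiagonal_eq_sum_range_succ_mk]
      have : ∀ kk ∈ Finset.range (r+1), binPMF (m * n) kk ε * binPMF n (r - kk) ε
          = ∑ δ ∈ Fintype.piFinset (fun _ : Fin m => Finset.range (n + 1)),
              (if ∑ i, δ i = kk then (∏ i, binPMF n (δ i) ε) * binPMF n (r - kk) ε else 0) := by
        intro kk _
        rw [← ih kk, Finset.sum_mul]
        refine Finset.sum_congr rfl fun δ _ => ?_
        split <;> simp
      rw [Finset.sum_congr rfl this, Finset.sum_comm]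
      refine Finset.sum_congr rfl fun δ _ => ?_
      rw [show (∑ kk ∈ Finset.range (r+1), if ∑ i, δ i = kk
            then (∏ i, binPMF n (δ i) ε) * binPMF n (r - kk) ε else 0)
          = ∑ kk ∈ Finset.range (r+1), (if kk = ∑ i, δ i
            then (∏ i, binPMF n (δ i) ε) * binPMF n (r - kk) ε else 0) from
        Finset.sum_congr rfl fun kk _ => by
          rcases eq_or_ne (∑ i, δ i) kk with h | h
          · simp [h]
          · rw [if_neg h, if_neg (fun hh => h hh.symm)]]
      rw [Finset.sum_ite_eq']
    rw [hR]
    refine Finset.sum_congr rfl fun δ hδ => ?_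
    have hsum : ∀ x : ℕ, ∑ i, (Fin.snoc δ x : Fin (m+1) → ℕ) i = (∑ i, δ i) + x := by
      intro x
      rw [Fin.sum_univ_castSucc]
      simp [Fin.snoc_castSucc]
    have hprod : ∀ x : ℕ, ∏ i, binPMF n ((Fin.snoc δ x : Fin (m+1) → ℕ) i) ε
        = (∏ i, binPMF n (δ i) ε) * binPMF n x ε := by
      intro x
      rw [Fin.prod_univ_castSucc]
      simp [Fin.snoc_castSucc]
    simp only [hsum, hprod]
    by_cases hle : ∑ i, δ i ≤ r
    · have : ∀ x, (∑ i, δ i) + x = r ↔ x = r - ∑ i, δ i := by omega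
      simp only [this]
      rw [show (∑ x ∈ Finset.range (n+1), if x = r - ∑ i, δ i
            then (∏ i, binPMF n (δ i) ε) * binPMF n x ε else 0)
          = if (r - ∑ i, δ i) ∈ Finset.range (n+1)
            then (∏ i, binPMF n (δ i) ε) * binPMF n (r - ∑ i, δ i) ε else 0 from
        Finset.sum_ite_eq' _ _ _]
      by_cases hmem : (r - ∑ i, δ i) ∈ Finset.range (n + 1)
      · simp [hmem, hle, Nat.lt_succ_iff]
      · rw [if_neg hmem, if_pos (by simp [Nat.lt_succ_iff, hle]),
          binPMF_eq_zero (by simp only [Finset.mem_range, Nat.lt_succ_iff] at hmem; omega),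
          mul_zero]
    · rw [if_neg (by simpa using hle)]
      refine Finset.sum_eq_zero fun x _ => ?_
      rw [if_neg (by omega)]

lemma binCDF_expand (n : ℕ) (ε : ℝ) (m t : ℕ) :
    ∑ r ∈ Finset.range (t + 1), binPMF (m * n) r ε
      = ∑ δ ∈ Fintype.piFinset (fun _ : Fin m => Finset.range (n + 1)),
          (if ∑ i, δ i ≤ t then ∏ i, binPMF n (δ i) ε else 0) := by
  have : ∀ r ∈ Finset.range (t+1), binPMF (m * n) r ε
      = ∑ δ ∈ Fintype.piFinset (fun _ : Fin m => Finset.range (n + 1)),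
          (if ∑ i, δ i = r then ∏ i, binPMF n (δ i) ε else 0) :=
    fun r _ => (sum_delta n ε m r).symm
  rw [Finset.sum_congr rfl this, Finset.sum_comm]
  refine Finset.sum_congr rfl fun δ _ => ?_
  rw [show (∑ r ∈ Finset.range (t+1), if ∑ i, δ i = r then ∏ i, binPMF n (δ i) ε else 0)
      = ∑ r ∈ Finset.range (t+1), if r = ∑ i, δ i then ∏ i, binPMF n (δ i) ε else 0 from
    Finset.sum_congr rfl fun r _ => by
      rcases eq_or_ne (∑ i, δ i) r with h | h
      · simp [h]
      · rw [if_neg h, if_neg fun hh => h hh.symm]]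
  rw [Finset.sum_ite_eq']
  simp [Nat.lt_succ_iff]

lemma marg (n : ℕ) (ε : ℝ) (l : ℕ) (C : (Fin (l + 1) → ℕ) → Prop) [DecidablePred C] :
    ∀ m (h : l + 1 ≤ m),
    ∑ δ ∈ Fintype.piFinset (fun _ : Fin m => Finset.range (n + 1)),
      (if C (fun i => δ (Fin.castLE h i)) then ∏ i, binPMF n (δ i) ε else 0)
      = ∑ δ ∈ Fintype.piFinset (fun _ : Fin (l + 1) => Finset.range (n + 1)),
          (if C δ then ∏ i, binPMF n (δ i) ε else 0) := by
  intro m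
  induction m with
  | zero => omega
  | succ m ih =>
    intro h
    by_cases hlt : l + 1 ≤ m
    · rw [sum_piFinset_snoc, ← ih hlt]
      refine Finset.sum_congr rfl fun δ hδ => ?_
      have hres : ∀ x : ℕ, (fun i => (Fin.snoc δ x : Fin (m+1) → ℕ) (Fin.castLE h i))
          = fun i => δ (Fin.castLE hlt i) := by
        intro x; funext i
        have : Fin.castLE h i = Fin.castSucc (Fin.castLE hlt i) := Fin.ext rfl
        rw [this, Fin.snoc_castSucc]
      have hprod : ∀ x : ℕ, ∏ i, binPMF n ((Fin.snoc δ x : Fin (m+1) → ℕ) i) ε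
          = (∏ i, binPMF n (δ i) ε) * binPMF n x ε := by
        intro x; rw [Fin.prod_univ_castSucc]; simp [Fin.snoc_castSucc]
      simp only [hres, hprod]
      rw [show (∑ x ∈ Finset.range (n+1), if C (fun i => δ (Fin.castLE hlt i))
            then (∏ i, binPMF n (δ i) ε) * binPMF n x ε else 0)
          = ∑ x ∈ Finset.range (n+1), (if C (fun i => δ (Fin.castLE hlt i))
            then (∏ i, binPMF n (δ i) ε) else 0) * binPMF n x ε from
        Finset.sum_congr rfl fun x _ => by split <;> simp]
      rw [show (∑ x ∈ Finset.range (n+1), (if C (fun i => δ (Fin.castLE hlt i))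
            then (∏ i, binPMF n (δ i) ε) else 0) * binPMF n x ε)
          = (if C (fun i => δ (Fin.castLE hlt i)) then (∏ i, binPMF n (δ i) ε) else 0)
            * ∑ x ∈ Finset.range (n+1), binPMF n x ε from (Finset.mul_sum _ _ _).symm]
      rw [sum_binPMF, mul_one]
    · obtain rfl : l = m := by omega
      rfl

lemma sum_filter_castLE {L l j : ℕ} (h : l + 1 ≤ L + 1) (hj : j ≤ l) (δ : Fin (L+1) → ℕ) :
    ∑ i ∈ Finset.univ.filter (fun i : Fin (l+1) => (i:ℕ) ≤ j), δ (Fin.castLE h i)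
      = ∑ i ∈ Finset.univ.filter (fun i : Fin (L+1) => (i:ℕ) ≤ j), δ i := by
  refine Finset.sum_bij' (i := fun a _ => Fin.castLE h a)
    (j := fun b hb => ⟨b.val, by simp only [Finset.mem_filter] at hb; omega⟩) ?_ ?_ ?_ ?_ ?_
  · intro a ha; simp only [Finset.mem_filter] at ha ⊢; exact ⟨Finset.mem_univ _, ha.2⟩
  · intro b hb; simp only [Finset.mem_filter] at hb ⊢; exact ⟨Finset.mem_univ _, hb.2⟩
  · intro a _; exact Fin.ext rfl
  · intro b _; exact Fin.ext rfl
  · intro a _; rfl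

lemma sum_univ_eq_filter {m : ℕ} (δ : Fin (m+1) → ℕ) :
    ∑ i, δ i = ∑ i ∈ Finset.univ.filter (fun i : Fin (m+1) => (i:ℕ) ≤ m), δ i := by
  rw [Finset.filter_true_of_mem]
  intro i _; omega

/-- The `(n,k,L)` sliding code is at least as reliable as the
`((L+1)n,(L+1)k)` Reed–Solomon block code:
`Pr_suc ≥ F((L+1)(n-k); (L+1)n, ε)`. -/
theorem stmt4 (n k L : ℕ) (hk : k ≤ n) (ε : ℝ) (hε0 : 0 ≤ ε) (hε1 : ε ≤ 1) :
    binCDF ((L + 1) * n) ((L + 1) * (n - k)) ε ≤ prSuc n k L ε := by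
  classical
  set t := (L + 1) * (n - k) with ht
  -- the "decodable-by-stage-l" condition, phrased over full patterns
  set Cond' : ℕ → (Fin (L+1) → ℕ) → Prop := fun l δ =>
    (∀ j : ℕ, j < l → (j + 1) * (n - k) <
        ∑ i ∈ Finset.univ.filter (fun i : Fin (L+1) => (i:ℕ) ≤ j), δ i)
      ∧ ∑ i ∈ Finset.univ.filter (fun i : Fin (L+1) => (i:ℕ) ≤ l), δ i ≤ (l + 1) * (n - k)
    with hCond'
  have hprod_nonneg : ∀ δ : Fin (L+1) → ℕ, 0 ≤ ∏ i, binPMF n (δ i) ε :=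
    fun δ => Finset.prod_nonneg fun i _ => binPMF_nonneg hε0 hε1
  -- existence of a first decodable stage
  have hexists : ∀ δ : Fin (L+1) → ℕ, ∑ i, δ i ≤ t → ∃ l ≤ L, Cond' l δ := by
    intro δ hs
    have hPL : ∑ i ∈ Finset.univ.filter (fun i : Fin (L+1) => (i:ℕ) ≤ L), δ i
        ≤ (L + 1) * (n - k) := by rw [← sum_univ_eq_filter]; exact hs
    set P : ℕ → Prop := fun j =>
      ∑ i ∈ Finset.univ.filter (fun i : Fin (L+1) => (i:ℕ) ≤ j), δ i ≤ (j + 1) * (n - k)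
      with hP
    have hex : ∃ j, P j := ⟨L, hPL⟩
    refine ⟨Nat.find hex, Nat.find_le hPL, ?_, Nat.find_spec hex⟩
    intro j hj
    have := Nat.find_min hex hj
    simpa [hP, not_le] using this
  -- pointwise bound
  have hpt : ∀ δ : Fin (L+1) → ℕ,
      (if ∑ i, δ i ≤ t then ∏ i, binPMF n (δ i) ε else 0)
        ≤ ∑ l ∈ Finset.range (L+1), (if Cond' l δ then ∏ i, binPMF n (δ i) ε else 0) := by
    intro δ
    by_cases hs : ∑ i, δ i ≤ t
    · obtain ⟨l, hlL, hC⟩ := hexists δ hs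
      rw [if_pos hs]
      have h0 : ∀ j ∈ Finset.range (L+1),
          (0:ℝ) ≤ if Cond' j δ then ∏ i, binPMF n (δ i) ε else 0 := by
        intro j _; split
        · exact hprod_nonneg δ
        · exact le_refl 0
      have hsl := Finset.single_le_sum h0 (Finset.mem_range.2 (by omega : l < L + 1))
      rwa [if_pos hC] at hsl
    · rw [if_neg hs]
      refine Finset.sum_nonneg fun j _ => ?_
      split
      · exact hprod_nonneg δ
      · exact le_refl 0
  -- main chain
  unfold binCDF
  rw [binCDF_expand n ε (L+1) t]
  calc ∑ δ ∈ Fintype.piFinset (fun _ : Fin (L+1) => Finset.range (n + 1)),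
          (if ∑ i, δ i ≤ t then ∏ i, binPMF n (δ i) ε else 0)
      ≤ ∑ δ ∈ Fintype.piFinset (fun _ : Fin (L+1) => Finset.range (n + 1)),
          ∑ l ∈ Finset.range (L+1), (if Cond' l δ then ∏ i, binPMF n (δ i) ε else 0) :=
        Finset.sum_le_sum fun δ _ => hpt δ
    _ = ∑ l ∈ Finset.range (L+1),
          ∑ δ ∈ Fintype.piFinset (fun _ : Fin (L+1) => Finset.range (n + 1)),
            (if Cond' l δ then ∏ i, binPMF n (δ i) ε else 0) := Finset.sum_comm
    _ = prSuc n k L ε := by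
        rw [prSuc]
        refine Finset.sum_congr rfl fun l hl => ?_
        rw [Finset.mem_range] at hl
        have h : l + 1 ≤ L + 1 := by omega
        set C : (Fin (l+1) → ℕ) → Prop := fun δ' =>
          (∀ j : Fin (l + 1), (j : ℕ) < l →
              ((j : ℕ) + 1) * (n - k) <
                ∑ i ∈ Finset.univ.filter (fun i : Fin (l + 1) => (i : ℕ) ≤ (j : ℕ)), δ' i)
            ∧ (∑ i, δ' i) ≤ (l + 1) * (n - k) with hC
        have hiff : ∀ δ : Fin (L+1) → ℕ, Cond' l δ ↔ C (fun i => δ (Fin.castLE h i)) := by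
          intro δ
          constructor
          · rintro ⟨h1, h2⟩
            refine ⟨fun j hj => ?_, ?_⟩
            · rw [sum_filter_castLE h (by omega)]
              exact h1 j hj
            · rw [sum_univ_eq_filter, sum_filter_castLE h (le_refl l)]
              exact h2
          · rintro ⟨h1, h2⟩
            constructor
            · intro j hj
              have := h1 ⟨j, by omega⟩ (by simpa using hj)
              rwa [sum_filter_castLE h (by omega)] at this
            · rw [sum_univ_eq_filter, sum_filter_castLE h (le_refl l)] at h2
              exact h2
        rw [show (∑ δ ∈ Fintype.piFinset (fun _ : Fin (L+1) => Finset.range (n + 1)),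
              (if Cond' l δ then ∏ i, binPMF n (δ i) ε else 0))
            = ∑ δ ∈ Fintype.piFinset (fun _ : Fin (L+1) => Finset.range (n + 1)),
              (if C (fun i => δ (Fin.castLE h i)) then ∏ i, binPMF n (δ i) ε else 0) from
          Finset.sum_congr rfl fun δ _ => if_congr (hiff δ) rfl rfl]
        rw [marg n ε l C (L+1) h]
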